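/- Theorem 1 (asymptotic stability of MPC without charging constraints, the AMoD Regulation Problem): Suppose V is nonempty and t_hor ≥ 2·tmax. There exists ρ̄ > 0 (depending only on N, V, t, and t_hor) such that for every weight 0 ≤ ρ₁ < ρ̄ and every MPC trajectory of the undisturbed system starting from any feasible state, there exists a time T with d(i,j)(τ) = 0 for all i, j ∈ N and all τ ≥ T; equivalently J_x(x(τ)) → 0 as τ → ∞, i.e., the model predictive controller drives the number of waiting customers to zero. -/

import Mathlib

/-! ## AMoD model (Zhang, Rossi, Pavone) -/

/-- A state of the AMoD system: waiting customers `d`, travel indicators `p`,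
waiting-vehicle indicators `u`. -/
structure AMoDState (N V : Type) where
  d : N → N → ℤ
  p : V → N → ℕ → ℤ
  u : V → N → ℤ

/-- A control of the AMoD system: customer-carrying trips `v`, rebalancing trips `w`. -/
structure AMoDControl (N V : Type) where
  v : V → N → N → ℤ
  w : V → N → N → ℤ

variable {N V : Type} [Fintype N] [DecidableEq N] [Fintype V]

/-- `Tmax i = (max_{j ≠ i} t j i) - 1`. -/
def Tmax (t : N → N → ℕ) (i : N) : ℕ :=
  ((Finset.univ : Finset N).erase i).sup (fun j => t j i) - 1

/-- `tmax = max_{i ≠ j} t i j`. -/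
def tmax (t : N → N → ℕ) : ℕ :=
  ((Finset.univ : Finset N).offDiag).sup (fun p => t p.1 p.2)

/-- `Σ_{i ∈ N} Σ_{T = 0}^{Tmax i} p k i T`. -/
def pSum (t : N → N → ℕ) (x : AMoDState N V) (k : V) : ℤ :=
  ∑ i : N, ∑ T ∈ Finset.range (Tmax t i + 1), x.p k i T

/-- Validity of a state: `d` nonnegative and zero on the diagonal,
`p` and `u` binary (and `p` vanishing out of range). -/
structure IsState (t : N → N → ℕ) (x : AMoDState N V) : Prop where
  d_nonneg : ∀ i j, 0 ≤ x.d i j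
  d_diag : ∀ i, x.d i i = 0
  p_bin : ∀ k i T, T ≤ Tmax t i → x.p k i T = 0 ∨ x.p k i T = 1
  p_oob : ∀ k i T, Tmax t i < T → x.p k i T = 0
  u_bin : ∀ k i, x.u k i = 0 ∨ x.u k i = 1

/-- Feasibility of a state: validity, constraint (P), and constraint (UP). -/
structure FeasState (t : N → N → ℕ) (x : AMoDState N V) : Prop where
  isState : IsState t x
  constrP : ∀ k, pSum t x k ≤ 1
  constrUP : ∀ k, (∑ i : N, x.u k i) + pSum t x k = 1

/-- Validity of a control: binary values, zero diagonal. -/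
structure IsControl (uc : AMoDControl N V) : Prop where
  v_bin : ∀ k i j, uc.v k i j = 0 ∨ uc.v k i j = 1
  w_bin : ∀ k i j, uc.w k i j = 0 ∨ uc.w k i j = 1
  v_diag : ∀ k i, uc.v k i i = 0
  w_diag : ∀ k i, uc.w k i i = 0

/-- Arrivals: nonnegative integers, zero on the diagonal. -/
def IsArrivals (c : N → N → ℤ) : Prop :=
  (∀ i j, 0 ≤ c i j) ∧ (∀ i, c i i = 0)

/-- Feasibility of a control at `(x, c)`: validity together with
constraints (A) and (B). -/
structure FeasControl (t : N → N → ℕ) (x : AMoDState N V) (c : N → N → ℤ)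
    (uc : AMoDControl N V) : Prop where
  isControl : IsControl uc
  constrA : ∀ k i, (∑ j : N, (uc.v k i j + uc.w k i j)) ≤ x.u k i + x.p k i 0
  constrB : ∀ i j, (∑ k : V, uc.v k i j) ≤ x.d i j + c i j

/-- The successor state `x⁺` of `x` under control `(v, w)` with arrivals `c`. -/
def succState (t : N → N → ℕ) (x : AMoDState N V) (c : N → N → ℤ)
    (uc : AMoDControl N V) : AMoDState N V where
  d := fun i j => x.d i j + c i j - ∑ k : V, uc.v k i j
  p := fun k i T =>
    if T < Tmax t i then
      x.p k i (T + 1) +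
        ∑ j ∈ Finset.univ.filter (fun j => t j i = T + 1), (uc.v k j i + uc.w k j i)
    else if T = Tmax t i then
      ∑ j ∈ Finset.univ.filter (fun j => t j i = Tmax t i + 1), (uc.v k j i + uc.w k j i)
    else 0
  u := fun k i => x.u k i + x.p k i 0 - ∑ j : N, (uc.v k i j + uc.w k i j)

/-- A feasible trajectory of the undisturbed system (`c ≡ 0`) from `x` over `n` steps. -/
def FeasTraj (t : N → N → ℕ) (x : AMoDState N V) (n : ℕ)
    (xs : ℕ → AMoDState N V) (cs : ℕ → AMoDControl N V) : Prop :=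
  xs 0 = x ∧ ∀ τ < n, FeasControl t (xs τ) (fun _ _ => 0) (cs τ) ∧
    xs (τ + 1) = succState t (xs τ) (fun _ _ => 0) (cs τ)

/-- The primary cost: total number of waiting customers. -/
def Jx (x : AMoDState N V) : ℤ := ∑ i : N, ∑ j : N, x.d i j

/-- The secondary cost: total rebalancing travel time. -/
def Ju (t : N → N → ℕ) (uc : AMoDControl N V) : ℤ :=
  ∑ k : V, ∑ i : N, ∑ j : N, (t i j : ℤ) * uc.w k i j

/-- The MPC cost of a plan over the horizon `thor`. -/
def planCost (t : N → N → ℕ) (ρ1 : ℝ) (thor : ℕ)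
    (xs : ℕ → AMoDState N V) (cs : ℕ → AMoDControl N V) : ℝ :=
  ∑ τ ∈ Finset.range thor, ((Jx (xs (τ + 1)) : ℝ) + ρ1 * (Ju t (cs τ) : ℝ))

/-- An MPC-optimal plan at a feasible state `x`. -/
def MPCOptimal (t : N → N → ℕ) (ρ1 : ℝ) (thor : ℕ) (x : AMoDState N V)
    (xs : ℕ → AMoDState N V) (cs : ℕ → AMoDControl N V) : Prop :=
  FeasTraj t x thor xs cs ∧
    ∀ ys ds, FeasTraj t x thor ys ds →
      planCost t ρ1 thor xs cs ≤ planCost t ρ1 thor ys ds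

/-- An (infinite) MPC trajectory of the undisturbed system: a feasible trajectory in
which every applied control is the first control of some MPC-optimal plan. -/
def MPCTraj (t : N → N → ℕ) (ρ1 : ℝ) (thor : ℕ)
    (xs : ℕ → AMoDState N V) (cs : ℕ → AMoDControl N V) : Prop :=
  (∀ τ, FeasControl t (xs τ) (fun _ _ => 0) (cs τ) ∧
      xs (τ + 1) = succState t (xs τ) (fun _ _ => 0) (cs τ)) ∧
  (∀ τ, ∃ ys ds, MPCOptimal t ρ1 thor (xs τ) ys ds ∧ ds 0 = cs τ)

/-! ### Auxiliary machinery -/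

/-- The zero control. -/
def zC (N V : Type) : AMoDControl N V := ⟨fun _ _ _ => 0, fun _ _ _ => 0⟩

/-- Iterating the undisturbed dynamics along a sequence of controls. -/
def planIter (t : N → N → ℕ) (es : ℕ → AMoDControl N V) (x : AMoDState N V) :
    ℕ → AMoDState N V
  | 0 => x
  | n + 1 => succState t (planIter t es x n) (fun _ _ => 0) (es n)

/-- Prepending a control to a control sequence. -/
def consC (uc : AMoDControl N V) (es : ℕ → AMoDControl N V) : ℕ → AMoDControl N V
  | 0 => uc
  | m + 1 => es m

lemma planIter_cons (t : N → N → ℕ) (uc : AMoDControl N V) (es : ℕ → AMoDControl N V)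
    (x : AMoDState N V) (n : ℕ) :
    planIter t (consC uc es) x (n + 1) =
      planIter t es (succState t x (fun _ _ => 0) uc) n := by
  induction n with
  | zero => rfl
  | succ n ih => show succState _ _ _ _ = _; rw [ih]; rfl

section Basic

variable (t : N → N → ℕ)

lemma one_le_tmax (hcard : 2 ≤ Fintype.card N) (ht : ∀ i j : N, i ≠ j → 1 ≤ t i j) :
    1 ≤ tmax t := by
  obtain ⟨i⟩ : Nonempty N := Fintype.card_pos_iff.mp (by omega)
  obtain ⟨j, hj⟩ := Fintype.exists_ne_of_one_lt_card (by omega) i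
  have hmem : (j, i) ∈ (Finset.univ : Finset N).offDiag := by
    simp [Finset.mem_offDiag, hj]
  exact le_trans (ht j i hj) (Finset.le_sup (f := fun p => t p.1 p.2) hmem)

lemma Tmax_add_one (hcard : 2 ≤ Fintype.card N) (ht : ∀ i j : N, i ≠ j → 1 ≤ t i j)
    (i : N) :
    Tmax t i + 1 = ((Finset.univ : Finset N).erase i).sup (fun j => t j i) := by
  obtain ⟨j, hj⟩ := Fintype.exists_ne_of_one_lt_card (by omega) i
  have hmem : j ∈ (Finset.univ : Finset N).erase i := by simp [hj]
  have h1 : 1 ≤ ((Finset.univ : Finset N).erase i).sup (fun j => t j i) :=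
    le_trans (ht j i hj) (Finset.le_sup (f := fun j => t j i) hmem)
  unfold Tmax
  omega

lemma t_le_Tmax_add_one (hcard : 2 ≤ Fintype.card N) (ht : ∀ i j : N, i ≠ j → 1 ≤ t i j)
    {j i : N} (hji : j ≠ i) : t j i ≤ Tmax t i + 1 := by
  rw [Tmax_add_one t hcard ht i]
  exact Finset.le_sup (f := fun j => t j i) (by simp [hji])

lemma t_le_tmax {i j : N} (hij : i ≠ j) : t i j ≤ tmax t := by
  have hmem : (i, j) ∈ (Finset.univ : Finset N).offDiag := by
    simp [Finset.mem_offDiag, hij]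
  exact Finset.le_sup (f := fun p => t p.1 p.2) hmem

lemma Tmax_add_one_le_tmax (hcard : 2 ≤ Fintype.card N)
    (ht : ∀ i j : N, i ≠ j → 1 ≤ t i j) (i : N) : Tmax t i + 1 ≤ tmax t := by
  rw [Tmax_add_one t hcard ht i]
  refine Finset.sup_le ?_
  intro j hj
  exact t_le_tmax t (Finset.ne_of_mem_erase hj)

end Basic

set_option linter.unusedSectionVars false
section StateFacts

variable {t : N → N → ℕ}

lemma IsState.p_nonneg {x : AMoDState N V} (hx : IsState t x) (k : V) (i : N) (T : ℕ) :
    0 ≤ x.p k i T := by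
  rcases le_or_gt T (Tmax t i) with h | h
  · rcases hx.p_bin k i T h with h' | h' <;> omega
  · rw [hx.p_oob k i T h]

lemma IsState.u_nonneg {x : AMoDState N V} (hx : IsState t x) (k : V) (i : N) :
    0 ≤ x.u k i := by rcases hx.u_bin k i with h | h <;> omega

lemma IsControl.v_nonneg {uc : AMoDControl N V} (h : IsControl uc) (k : V) (i j : N) :
    0 ≤ uc.v k i j := by rcases h.v_bin k i j with h' | h' <;> omega

lemma IsControl.w_nonneg {uc : AMoDControl N V} (h : IsControl uc) (k : V) (i j : N) :
    0 ≤ uc.w k i j := by rcases h.w_bin k i j with h' | h' <;> omega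

lemma Ju_nonneg {uc : AMoDControl N V} (h : IsControl uc) : 0 ≤ Ju t uc := by
  refine Finset.sum_nonneg fun k _ => Finset.sum_nonneg fun i _ => Finset.sum_nonneg
    fun j _ => mul_nonneg (by positivity) (h.w_nonneg k i j)

lemma pSum_nonneg {x : AMoDState N V} (hx : IsState t x) (k : V) : 0 ≤ pSum t x k :=
  Finset.sum_nonneg fun i _ => Finset.sum_nonneg fun T _ => hx.p_nonneg k i T

lemma le_pSum {x : AMoDState N V} {k : V} (hp : ∀ i T, 0 ≤ x.p k i T) {i : N} {T : ℕ}
    (hT : T ≤ Tmax t i) : x.p k i T ≤ pSum t x k := by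
  have h1 : x.p k i T ≤ ∑ T' ∈ Finset.range (Tmax t i + 1), x.p k i T' :=
    Finset.single_le_sum (fun T' _ => hp i T') (Finset.mem_range.mpr (by omega))
  refine h1.trans ?_
  exact Finset.single_le_sum (f := fun i' => ∑ T' ∈ Finset.range (Tmax t i' + 1), x.p k i' T')
    (fun i' _ => Finset.sum_nonneg fun T' _ => hp i' T') (Finset.mem_univ i)

lemma Jx_nonneg {x : AMoDState N V} (hx : IsState t x) : 0 ≤ Jx x :=
  Finset.sum_nonneg fun i _ => Finset.sum_nonneg fun j _ => hx.d_nonneg i j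

lemma d_le_Jx {x : AMoDState N V} (hx : IsState t x) (i j : N) : x.d i j ≤ Jx x := by
  have h1 : x.d i j ≤ ∑ j', x.d i j' :=
    Finset.single_le_sum (fun j' _ => hx.d_nonneg i j') (Finset.mem_univ j)
  refine h1.trans ?_
  exact Finset.single_le_sum (f := fun i' => ∑ j', x.d i' j')
    (fun i' _ => Finset.sum_nonneg fun j' _ => hx.d_nonneg i' j') (Finset.mem_univ i)

end StateFacts

section SuccFacts

variable {t : N → N → ℕ}

lemma sum_arrivals (hcard : 2 ≤ Fintype.card N) (ht : ∀ i j : N, i ≠ j → 1 ≤ t i j)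
    {uc : AMoDControl N V} (hvd : ∀ k i, uc.v k i i = 0) (hwd : ∀ k i, uc.w k i i = 0)
    (k : V) (i : N) :
    ∑ T ∈ Finset.range (Tmax t i + 1),
        ∑ j ∈ Finset.univ.filter (fun j => t j i = T + 1), (uc.v k j i + uc.w k j i)
      = ∑ j : N, (uc.v k j i + uc.w k j i) := by
  have hstep : ∀ T ∈ Finset.range (Tmax t i + 1),
      ∑ j ∈ Finset.univ.filter (fun j => t j i = T + 1), (uc.v k j i + uc.w k j i)
        = ∑ j : N, if t j i = T + 1 then uc.v k j i + uc.w k j i else 0 :=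
    fun T _ => Finset.sum_filter _ _
  rw [Finset.sum_congr rfl hstep, Finset.sum_comm]
  refine Finset.sum_congr rfl fun j _ => ?_
  by_cases hji : j = i
  · subst hji
    simp [hvd k j, hwd k j]
  · have h1 : 1 ≤ t j i := ht j i hji
    have h2 : t j i ≤ Tmax t i + 1 := t_le_Tmax_add_one t hcard ht hji
    refine Finset.sum_eq_single_of_mem (t j i - 1)
      (Finset.mem_range.mpr (by omega)) (fun b _ hb => if_neg (by omega)) |>.trans ?_
    rw [if_pos (by omega)]

lemma pSum_succ (hcard : 2 ≤ Fintype.card N) (ht : ∀ i j : N, i ≠ j → 1 ≤ t i j)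
    (c : N → N → ℤ) {uc : AMoDControl N V}
    (hvd : ∀ k i, uc.v k i i = 0) (hwd : ∀ k i, uc.w k i i = 0)
    (x : AMoDState N V) (k : V) :
    pSum t (succState t x c uc) k
      = pSum t x k - (∑ i, x.p k i 0) + ∑ i, ∑ j, (uc.v k i j + uc.w k i j) := by
  unfold pSum
  have hper : ∀ i : N,
      ∑ T ∈ Finset.range (Tmax t i + 1), (succState t x c uc).p k i T
        = ((∑ T ∈ Finset.range (Tmax t i + 1), x.p k i T) - x.p k i 0)
            + ∑ j : N, (uc.v k j i + uc.w k j i) := by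
    intro i
    rw [Finset.sum_range_succ]
    have hmain : ∀ T ∈ Finset.range (Tmax t i), (succState t x c uc).p k i T
        = x.p k i (T + 1) + ∑ j ∈ Finset.univ.filter (fun j => t j i = T + 1),
            (uc.v k j i + uc.w k j i) := by
      intro T hT
      rw [Finset.mem_range] at hT
      show (if T < Tmax t i then _ else _) = _
      rw [if_pos hT]
    have hlast : (succState t x c uc).p k i (Tmax t i)
        = ∑ j ∈ Finset.univ.filter (fun j => t j i = Tmax t i + 1),
            (uc.v k j i + uc.w k j i) := by
      show (if Tmax t i < Tmax t i then _ else if Tmax t i = Tmax t i then _ else _) = _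
      rw [if_neg (lt_irrefl _), if_pos rfl]
    rw [Finset.sum_congr rfl hmain, hlast, Finset.sum_add_distrib, add_assoc]
    congr 1
    · have h := Finset.sum_range_succ' (fun T => x.p k i T) (Tmax t i)
      linarith [h]
    · rw [← Finset.sum_range_succ (fun T => ∑ j ∈ Finset.univ.filter
        (fun j => t j i = T + 1), (uc.v k j i + uc.w k j i)) (Tmax t i)]
      exact sum_arrivals hcard ht hvd hwd k i
  rw [Finset.sum_congr rfl fun i _ => hper i, Finset.sum_add_distrib,
    Finset.sum_sub_distrib]
  congr 1
  exact Finset.sum_comm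

lemma uSum_succ (c : N → N → ℤ) (uc : AMoDControl N V) (x : AMoDState N V) (k : V) :
    ∑ i, (succState t x c uc).u k i
      = (∑ i, x.u k i) + (∑ i, x.p k i 0) - ∑ i, ∑ j, (uc.v k i j + uc.w k i j) := by
  simp only [succState]
  rw [Finset.sum_sub_distrib, Finset.sum_add_distrib]

lemma d_succ (c : N → N → ℤ) (uc : AMoDControl N V) (x : AMoDState N V) (i j : N) :
    (succState t x c uc).d i j = x.d i j + c i j - ∑ k, uc.v k i j := rfl

lemma u_succ (c : N → N → ℤ) (uc : AMoDControl N V) (x : AMoDState N V) (k : V) (i : N) :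
    (succState t x c uc).u k i = x.u k i + x.p k i 0 - ∑ j, (uc.v k i j + uc.w k i j) := rfl

lemma feasState_succ (hcard : 2 ≤ Fintype.card N) (ht : ∀ i j : N, i ≠ j → 1 ≤ t i j)
    {x : AMoDState N V} {uc : AMoDControl N V} (hx : FeasState t x)
    (hc : FeasControl t x (fun _ _ => 0) uc) :
    FeasState t (succState t x (fun _ _ => 0) uc) := by
  have hvd := hc.isControl.v_diag
  have hwd := hc.isControl.w_diag
  set y := succState t x (fun _ _ => 0) uc with hy
  have hUP : ∀ k, (∑ i, y.u k i) + pSum t y k = 1 := by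
    intro k
    rw [hy, uSum_succ, pSum_succ hcard ht _ hvd hwd]
    have h := hx.constrUP k
    ring_nf
    ring_nf at h
    linarith [h]
  have hdnn : ∀ i j, 0 ≤ y.d i j := by
    intro i j
    have hB := hc.constrB i j
    rw [hy, d_succ]
    linarith [hB]
  have hpnn : ∀ k i T, 0 ≤ y.p k i T := by
    intro k i T
    have hsum : ∀ s : ℕ, 0 ≤ ∑ j ∈ Finset.univ.filter (fun j => t j i = s),
        (uc.v k j i + uc.w k j i) := fun s => Finset.sum_nonneg fun j _ =>
      add_nonneg (hc.isControl.v_nonneg k j i) (hc.isControl.w_nonneg k j i)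
    show (0:ℤ) ≤ if T < Tmax t i then _ else if T = Tmax t i then _ else 0
    split
    · exact add_nonneg (hx.isState.p_nonneg k i (T+1)) (hsum (T+1))
    · split
      · exact hsum _
      · exact le_refl 0
  have hunn : ∀ k i, 0 ≤ y.u k i := by
    intro k i
    have hA := hc.constrA k i
    rw [hy, u_succ]
    linarith [hA]
  have hpSnn : ∀ k, 0 ≤ pSum t y k :=
    fun k => Finset.sum_nonneg fun i _ => Finset.sum_nonneg fun T _ => hpnn k i T
  have huSnn : ∀ k, 0 ≤ ∑ i, y.u k i :=
    fun k => Finset.sum_nonneg fun i _ => hunn k i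
  have hpS1 : ∀ k, pSum t y k ≤ 1 := fun k => by linarith [hUP k, huSnn k]
  have huS1 : ∀ k, (∑ i, y.u k i) ≤ 1 := fun k => by linarith [hUP k, hpSnn k]
  refine ⟨⟨hdnn, ?_, ?_, ?_, ?_⟩, hpS1, hUP⟩
  · intro i
    rw [hy, d_succ]
    have : ∀ k ∈ (Finset.univ : Finset V), uc.v k i i = 0 := fun k _ => hvd k i
    rw [hx.isState.d_diag i, Finset.sum_congr rfl this]
    simp
  · intro k i T hT
    have h0 := hpnn k i T
    have h1 : y.p k i T ≤ 1 := le_trans (le_pSum (hpnn k) hT) (hpS1 k)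
    omega
  · intro k i T hT
    show (if T < Tmax t i then _ else if T = Tmax t i then _ else (0:ℤ)) = 0
    rw [if_neg (by omega), if_neg (by omega)]
  · intro k i
    have h0 := hunn k i
    have h1 : y.u k i ≤ 1 :=
      le_trans (Finset.single_le_sum (fun i' _ => hunn k i') (Finset.mem_univ i)) (huS1 k)
    omega

lemma p_zero_of_avail {x : AMoDState N V} (hx : FeasState t x) {k : V} {a : N}
    (ha : 1 ≤ x.u k a + x.p k a 0) (i : N) (T : ℕ) (hT1 : 1 ≤ T) : x.p k i T = 0 := by
  rcases lt_or_ge (Tmax t i) T with h | h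
  · exact hx.isState.p_oob k i T h
  have hp : ∀ i' T', 0 ≤ x.p k i' T' := hx.isState.p_nonneg k
  have hu : ∀ i', 0 ≤ x.u k i' := hx.isState.u_nonneg k
  have h1 : x.u k a ≤ ∑ i', x.u k i' :=
    Finset.single_le_sum (fun i' _ => hu i') (Finset.mem_univ a)
  have hinner : ∀ i', 0 ≤ ∑ T' ∈ Finset.range (Tmax t i' + 1), x.p k i' T' :=
    fun i' => Finset.sum_nonneg fun T' _ => hp i' T'
  have h2 : x.p k a 0 + x.p k i T ≤ pSum t x k := by
    by_cases hia : i = a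
    · subst hia
      have hmem0 : (0:ℕ) ∈ Finset.range (Tmax t i + 1) := Finset.mem_range.mpr (by omega)
      have hS : ∑ T' ∈ Finset.range (Tmax t i + 1), x.p k i T'
          = x.p k i 0 + ∑ T' ∈ (Finset.range (Tmax t i + 1)).erase 0, x.p k i T' :=
        (Finset.add_sum_erase _ _ hmem0).symm
      have hT2 : x.p k i T ≤ ∑ T' ∈ (Finset.range (Tmax t i + 1)).erase 0, x.p k i T' :=
        Finset.single_le_sum (fun T' _ => hp i T')
          (Finset.mem_erase.mpr ⟨by omega, Finset.mem_range.mpr (by omega)⟩)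
      have hle : x.p k i 0 + x.p k i T ≤ ∑ T' ∈ Finset.range (Tmax t i + 1), x.p k i T' := by
        rw [hS]; linarith
      refine hle.trans ?_
      exact Finset.single_le_sum
        (f := fun i' => ∑ T' ∈ Finset.range (Tmax t i' + 1), x.p k i' T')
        (fun i' _ => hinner i') (Finset.mem_univ i)
    · have hSa : x.p k a 0 ≤ ∑ T' ∈ Finset.range (Tmax t a + 1), x.p k a T' :=
        Finset.single_le_sum (fun T' _ => hp a T') (Finset.mem_range.mpr (by omega))
      have hSi : x.p k i T ≤ ∑ T' ∈ Finset.range (Tmax t i + 1), x.p k i T' :=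
        Finset.single_le_sum (fun T' _ => hp i T') (Finset.mem_range.mpr (by omega))
      have hout : pSum t x k
          = (∑ T' ∈ Finset.range (Tmax t a + 1), x.p k a T')
            + ∑ i' ∈ Finset.univ.erase a,
                ∑ T' ∈ Finset.range (Tmax t i' + 1), x.p k i' T' :=
        (Finset.add_sum_erase _ _ (Finset.mem_univ a)).symm
      have hi' : (∑ T' ∈ Finset.range (Tmax t i + 1), x.p k i T')
          ≤ ∑ i' ∈ Finset.univ.erase a,
              ∑ T' ∈ Finset.range (Tmax t i' + 1), x.p k i' T' :=
        Finset.single_le_sum (fun i' _ => hinner i')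
          (Finset.mem_erase.mpr ⟨hia, Finset.mem_univ i⟩)
      rw [hout]; linarith
  have hUP := hx.constrUP k
  have h3 := hp i T
  have huSnn : 0 ≤ ∑ i', x.u k i' := Finset.sum_nonneg fun i' _ => hu i'
  linarith

lemma exists_loc {x : AMoDState N V} (hx : FeasState t x) (k : V) :
    (∃ i, x.u k i = 1) ∨ (∃ i T, T ≤ Tmax t i ∧ x.p k i T = 1) := by
  by_contra hcon
  push_neg at hcon
  obtain ⟨h1, h2⟩ := hcon
  have hu : ∀ i, x.u k i = 0 := fun i => (hx.isState.u_bin k i).resolve_right (h1 i)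
  have hp : ∀ i T, x.p k i T = 0 := by
    intro i T
    rcases lt_or_ge (Tmax t i) T with h | h
    · exact hx.isState.p_oob k i T h
    · exact (hx.isState.p_bin k i T h).resolve_right (h2 i T h)
  have hUP := hx.constrUP k
  rw [Finset.sum_congr rfl fun i _ => hu i] at hUP
  unfold pSum at hUP
  simp [hp] at hUP

end SuccFacts

section Plans
open scoped Classical
variable {t : N → N → ℕ}

/-- The control that sends vehicle `k0` with a customer from `i0` to `j0`. -/
noncomputable def serveC (k0 : V) (i0 j0 : N) : AMoDControl N V :=
  ⟨fun k i j => if k = k0 then if i = i0 then if j = j0 then 1 else 0 else 0 else 0,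
   fun _ _ _ => 0⟩

/-- The control that rebalances vehicle `k0` from `a` to `b`. -/
noncomputable def tripC (k0 : V) (a b : N) : AMoDControl N V :=
  ⟨fun _ _ _ => 0,
   fun k i j => if k = k0 then if i = a then if j = b then 1 else 0 else 0 else 0⟩

lemma Jx_congr {x y : AMoDState N V} (h : ∀ i j, x.d i j = y.d i j) : Jx x = Jx y :=
  Finset.sum_congr rfl fun i _ => Finset.sum_congr rfl fun j _ => h i j

lemma zC_isControl : IsControl (zC N V) :=
  ⟨fun _ _ _ => Or.inl rfl, fun _ _ _ => Or.inl rfl, fun _ _ => rfl, fun _ _ => rfl⟩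

lemma Ju_zC : Ju t (zC N V) = 0 := by simp [Ju, zC]

lemma zC_feas {x : AMoDState N V} (hx : FeasState t x) :
    FeasControl t x (fun _ _ => 0) (zC N V) := by
  refine ⟨zC_isControl, fun k i => ?_, fun i j => ?_⟩
  · simp only [zC, add_zero]
    simp only [Finset.sum_const_zero]
    exact add_nonneg (hx.isState.u_nonneg k i) (hx.isState.p_nonneg k i 0)
  · simp only [zC, Finset.sum_const_zero]
    exact add_nonneg (hx.isState.d_nonneg i j) (le_refl 0)

lemma d_succ_z {x : AMoDState N V} (i j : N) :
    (succState t x (fun _ _ => 0) (zC N V)).d i j = x.d i j := by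
  rw [d_succ]; simp [zC]

lemma p_succ_z {x : AMoDState N V} (k : V) (i : N) (T : ℕ) :
    (succState t x (fun _ _ => 0) (zC N V)).p k i T
      = if T < Tmax t i then x.p k i (T + 1) else 0 := by
  show (if T < Tmax t i then _ else if T = Tmax t i then _ else _) = _
  split
  · simp [zC]
  · split <;> simp [zC]

/-- All controls in a sequence are feasible at the corresponding iterated state. -/
def GoodCtl (t : N → N → ℕ) (x : AMoDState N V) (es : ℕ → AMoDControl N V) : Prop :=
  ∀ m, FeasControl t (planIter t es x m) (fun _ _ => 0) (es m)

/-- Existence of a feasible plan which serves one customer by time `s`, using no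
rebalancing. -/
def PlanZ (t : N → N → ℕ) (x : AMoDState N V) (s : ℕ) : Prop :=
  ∃ es, GoodCtl t x es ∧ (∀ n, Jx (planIter t es x n) ≤ Jx x) ∧
    (∀ n, s ≤ n → Jx (planIter t es x n) ≤ Jx x - 1) ∧ (∀ m, Ju t (es m) = 0)

/-- Existence of a feasible plan which serves one customer by time `s`, using
rebalancing cost at most `tmax` concentrated in a single step. -/
def PlanG (t : N → N → ℕ) (x : AMoDState N V) (s : ℕ) : Prop :=
  ∃ es, GoodCtl t x es ∧ (∀ n, Jx (planIter t es x n) ≤ Jx x) ∧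
    (∀ n, s ≤ n → Jx (planIter t es x n) ≤ Jx x - 1) ∧
    (∃ m0, ∀ m, 0 ≤ Ju t (es m) ∧ Ju t (es m) ≤ if m = m0 then (tmax t : ℤ) else 0)

lemma planZ_mono {x : AMoDState N V} {s s' : ℕ} (hss : s ≤ s') (h : PlanZ t x s) :
    PlanZ t x s' := by
  obtain ⟨es, h1, h2, h3, h4⟩ := h
  exact ⟨es, h1, h2, fun n hn => h3 n (le_trans hss hn), h4⟩

lemma planG_mono {x : AMoDState N V} {s s' : ℕ} (hss : s ≤ s') (h : PlanG t x s) :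
    PlanG t x s' := by
  obtain ⟨es, h1, h2, h3, h4⟩ := h
  exact ⟨es, h1, h2, fun n hn => h3 n (le_trans hss hn), h4⟩

lemma planG_of_planZ {x : AMoDState N V} {s : ℕ} (h : PlanZ t x s) : PlanG t x s := by
  obtain ⟨es, h1, h2, h3, h4⟩ := h
  refine ⟨es, h1, h2, h3, 0, fun m => ?_⟩
  rw [h4 m]
  refine ⟨le_refl 0, ?_⟩
  split <;> simp

lemma zero_tail {y : AMoDState N V} (hcard : 2 ≤ Fintype.card N)
    (ht : ∀ i j : N, i ≠ j → 1 ≤ t i j) (hy : FeasState t y) (n : ℕ) :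
    FeasState t (planIter t (fun _ => zC N V) y n) ∧
      ∀ i j, (planIter t (fun _ => zC N V) y n).d i j = y.d i j := by
  induction n with
  | zero => exact ⟨hy, fun i j => rfl⟩
  | succ n ih =>
    obtain ⟨h1, h2⟩ := ih
    refine ⟨feasState_succ hcard ht h1 (zC_feas h1), fun i j => ?_⟩
    show (succState t _ _ _).d i j = _
    rw [d_succ_z, h2]

lemma serveC_sumj (k0 : V) (i0 j0 : N) (k : V) (i : N) :
    ∑ j, ((serveC k0 i0 j0 : AMoDControl N V).v k i j + (serveC k0 i0 j0).w k i j)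
      = if k = k0 then if i = i0 then 1 else 0 else 0 := by
  simp only [serveC, add_zero]
  by_cases hk : k = k0 <;> by_cases hi : i = i0 <;> simp [hk, hi, Finset.sum_ite_eq']

lemma serveC_sumk (k0 : V) (i0 j0 : N) (i j : N) :
    ∑ k, (serveC k0 i0 j0 : AMoDControl N V).v k i j
      = if i = i0 then if j = j0 then 1 else 0 else 0 := by
  simp [serveC, Finset.sum_ite_eq']

lemma Ju_serveC (k0 : V) (i0 j0 : N) : Ju t (serveC k0 i0 j0 : AMoDControl N V) = 0 := by
  simp [Ju, serveC]

lemma serveC_isControl {k0 : V} {i0 j0 : N} (hij : i0 ≠ j0) :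
    IsControl (serveC k0 i0 j0 : AMoDControl N V) := by
  refine ⟨?_, fun _ _ _ => Or.inl rfl, ?_, fun _ _ => rfl⟩
  · intro k i j
    by_cases hk : k = k0 <;> by_cases hi : i = i0 <;> by_cases hj : j = j0 <;>
      simp [serveC, hk, hi, hj]
  · intro k i
    by_cases hk : k = k0 <;> by_cases hi : i = i0 <;> simp [serveC, hk, hi, hij]

lemma serveC_feas {x : AMoDState N V} {k0 : V} {i0 j0 : N} (hx : FeasState t x)
    (hA : 1 ≤ x.u k0 i0 + x.p k0 i0 0) (hij : i0 ≠ j0) (hd : 1 ≤ x.d i0 j0) :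
    FeasControl t x (fun _ _ => 0) (serveC k0 i0 j0) := by
  refine ⟨serveC_isControl hij, ?_, ?_⟩
  · intro k i
    rw [serveC_sumj]
    by_cases hk : k = k0
    · by_cases hi : i = i0
      · rw [if_pos hk, if_pos hi]; subst hk; subst hi; exact hA
      · rw [if_pos hk, if_neg hi]
        exact add_nonneg (hx.isState.u_nonneg _ _) (hx.isState.p_nonneg _ _ _)
    · rw [if_neg hk]
      exact add_nonneg (hx.isState.u_nonneg _ _) (hx.isState.p_nonneg _ _ _)
  · intro i j
    rw [serveC_sumk]
    by_cases hi : i = i0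
    · by_cases hj : j = j0
      · rw [if_pos hi, if_pos hj]; subst hi; subst hj; linarith [hd]
      · rw [if_pos hi, if_neg hj]; linarith [hx.isState.d_nonneg i j]
    · rw [if_neg hi]; linarith [hx.isState.d_nonneg i j]

lemma planZ_serve (hcard : 2 ≤ Fintype.card N) (ht : ∀ i j : N, i ≠ j → 1 ≤ t i j)
    {x : AMoDState N V} {k0 : V} {i0 j0 : N} (hx : FeasState t x)
    (hA : 1 ≤ x.u k0 i0 + x.p k0 i0 0) (hd : 1 ≤ x.d i0 j0) : PlanZ t x 1 := by
  have hij : i0 ≠ j0 := by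
    intro h; subst h; have := hx.isState.d_diag i0; omega
  have hfc := serveC_feas hx hA hij hd
  set x1 := succState t x (fun _ _ => 0) (serveC k0 i0 j0) with hx1
  have hx1f : FeasState t x1 := feasState_succ hcard ht hx hfc
  have hd1 : ∀ i j, x1.d i j
      = x.d i j - (if i = i0 then if j = j0 then 1 else 0 else 0) := by
    intro i j
    rw [hx1, d_succ, serveC_sumk]
    ring
  have hJx1 : Jx x1 = Jx x - 1 := by
    unfold Jx
    rw [Finset.sum_congr rfl fun i (_ : i ∈ Finset.univ) =>
      Finset.sum_congr rfl fun j (_ : j ∈ Finset.univ) => hd1 i j]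
    rw [Finset.sum_congr rfl fun i (_ : i ∈ Finset.univ) =>
      Finset.sum_sub_distrib (s := Finset.univ) _ _, Finset.sum_sub_distrib]
    simp [Finset.sum_ite_eq']
  refine ⟨consC (serveC k0 i0 j0) (fun _ => zC N V), ?_, ?_, ?_, ?_⟩
  · intro m
    cases m with
    | zero => exact hfc
    | succ m =>
      show FeasControl t (planIter t (consC _ _) x (m + 1)) _ (zC N V)
      rw [planIter_cons, ← hx1]
      exact zC_feas (zero_tail hcard ht hx1f m).1
  · intro n
    cases n with
    | zero => exact le_refl _
    | succ n =>
      rw [planIter_cons, ← hx1, Jx_congr (zero_tail hcard ht hx1f n).2, hJx1]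
      omega
  · intro n hn
    cases n with
    | zero => omega
    | succ n =>
      rw [planIter_cons, ← hx1, Jx_congr (zero_tail hcard ht hx1f n).2, hJx1]
  · intro m
    cases m with
    | zero => exact Ju_serveC k0 i0 j0
    | succ m => exact Ju_zC

lemma planZ_prepend {x : AMoDState N V} {uc : AMoDControl N V} {s : ℕ}
    (hc : FeasControl t x (fun _ _ => 0) uc) (hJu : Ju t uc = 0)
    (hdeq : ∀ i j, (succState t x (fun _ _ => 0) uc).d i j = x.d i j)
    (h : PlanZ t (succState t x (fun _ _ => 0) uc) s) : PlanZ t x (s + 1) := by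
  obtain ⟨es, hG, hle, hdrop, hJ⟩ := h
  have hJxeq : Jx (succState t x (fun _ _ => 0) uc) = Jx x := Jx_congr hdeq
  refine ⟨consC uc es, ?_, ?_, ?_, ?_⟩
  · intro m
    cases m with
    | zero => exact hc
    | succ m =>
      show FeasControl t _ _ (es m)
      rw [planIter_cons]
      exact hG m
  · intro n
    cases n with
    | zero => exact le_refl _
    | succ n => rw [planIter_cons, ← hJxeq]; exact hle n
  · intro n hn
    cases n with
    | zero => omega
    | succ n => rw [planIter_cons, ← hJxeq]; exact hdrop n (by omega)
  · intro m
    cases m with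
    | zero => exact hJu
    | succ m => exact hJ m

lemma planG_prepend_zero {x : AMoDState N V} {uc : AMoDControl N V} {s : ℕ}
    (hc : FeasControl t x (fun _ _ => 0) uc) (hJu : Ju t uc = 0)
    (hdeq : ∀ i j, (succState t x (fun _ _ => 0) uc).d i j = x.d i j)
    (h : PlanG t (succState t x (fun _ _ => 0) uc) s) : PlanG t x (s + 1) := by
  obtain ⟨es, hG, hle, hdrop, m0, hJ⟩ := h
  have hJxeq : Jx (succState t x (fun _ _ => 0) uc) = Jx x := Jx_congr hdeq
  refine ⟨consC uc es, ?_, ?_, ?_, m0 + 1, ?_⟩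
  · intro m
    cases m with
    | zero => exact hc
    | succ m =>
      show FeasControl t _ _ (es m)
      rw [planIter_cons]
      exact hG m
  · intro n
    cases n with
    | zero => exact le_refl _
    | succ n => rw [planIter_cons, ← hJxeq]; exact hle n
  · intro n hn
    cases n with
    | zero => omega
    | succ n => rw [planIter_cons, ← hJxeq]; exact hdrop n (by omega)
  · intro m
    cases m with
    | zero =>
      show 0 ≤ Ju t uc ∧ Ju t uc ≤ _
      refine ⟨le_of_eq hJu.symm, ?_⟩
      rw [hJu]
      split
      · positivity
      · exact le_refl 0
    | succ m =>
      obtain ⟨h1, h2⟩ := hJ m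
      refine ⟨h1, ?_⟩
      by_cases hm : m = m0
      · subst hm; rw [if_pos rfl] at h2; rw [if_pos rfl]; exact h2
      · rw [if_neg hm] at h2; rw [if_neg (by omega)]; exact h2

lemma planG_prepend_trip {x : AMoDState N V} {uc : AMoDControl N V} {s : ℕ}
    (hc : FeasControl t x (fun _ _ => 0) uc) (hJnn : 0 ≤ Ju t uc)
    (hJb : Ju t uc ≤ (tmax t : ℤ))
    (hdeq : ∀ i j, (succState t x (fun _ _ => 0) uc).d i j = x.d i j)
    (h : PlanZ t (succState t x (fun _ _ => 0) uc) s) : PlanG t x (s + 1) := by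
  obtain ⟨es, hG, hle, hdrop, hJ⟩ := h
  have hJxeq : Jx (succState t x (fun _ _ => 0) uc) = Jx x := Jx_congr hdeq
  refine ⟨consC uc es, ?_, ?_, ?_, 0, ?_⟩
  · intro m
    cases m with
    | zero => exact hc
    | succ m =>
      show FeasControl t _ _ (es m)
      rw [planIter_cons]
      exact hG m
  · intro n
    cases n with
    | zero => exact le_refl _
    | succ n => rw [planIter_cons, ← hJxeq]; exact hle n
  · intro n hn
    cases n with
    | zero => omega
    | succ n => rw [planIter_cons, ← hJxeq]; exact hdrop n (by omega)
  · intro m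
    cases m with
    | zero => exact ⟨hJnn, by rw [if_pos rfl]; exact hJb⟩
    | succ m =>
      show 0 ≤ Ju t (es m) ∧ Ju t (es m) ≤ _
      rw [hJ m]
      exact ⟨le_refl 0, by rw [if_neg (by omega)]⟩

lemma planZ_wait (hcard : 2 ≤ Fintype.card N) (ht : ∀ i j : N, i ≠ j → 1 ≤ t i j)
    (k0 : V) (i0 j0 : N) :
    ∀ (T' : ℕ) (x : AMoDState N V), FeasState t x → x.p k0 i0 T' = 1 →
      T' ≤ Tmax t i0 → 1 ≤ x.d i0 j0 → PlanZ t x (T' + 1) := by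
  intro T'
  induction T' with
  | zero =>
    intro x hx hp hT hd
    exact planZ_serve hcard ht (k0 := k0) hx
      (by have := hx.isState.u_nonneg k0 i0; omega) hd
  | succ T' ih =>
    intro x hx hp hT hd
    have hzf := zC_feas hx
    have hyf : FeasState t (succState t x (fun _ _ => 0) (zC N V)) :=
      feasState_succ hcard ht hx hzf
    have hyp : (succState t x (fun _ _ => 0) (zC N V)).p k0 i0 T' = 1 := by
      rw [p_succ_z, if_pos (by omega)]; exact hp
    have hyd : ∀ i j, (succState t x (fun _ _ => 0) (zC N V)).d i j = x.d i j :=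
      fun i j => d_succ_z i j
    have hplan := ih _ hyf hyp (by omega) (by rw [hyd]; exact hd)
    exact planZ_prepend hzf Ju_zC hyd hplan

lemma tripC_sumj (k0 : V) (a b : N) (k : V) (i : N) :
    ∑ j, ((tripC k0 a b : AMoDControl N V).v k i j + (tripC k0 a b).w k i j)
      = if k = k0 then if i = a then 1 else 0 else 0 := by
  simp only [tripC, zero_add]
  by_cases hk : k = k0 <;> by_cases hi : i = a <;> simp [hk, hi, Finset.sum_ite_eq']

lemma tripC_isControl {k0 : V} {a b : N} (hab : a ≠ b) :
    IsControl (tripC k0 a b : AMoDControl N V) := by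
  refine ⟨fun _ _ _ => Or.inl rfl, ?_, fun _ _ => rfl, ?_⟩
  · intro k i j
    by_cases hk : k = k0 <;> by_cases hi : i = a <;> by_cases hj : j = b <;>
      simp [tripC, hk, hi, hj]
  · intro k i
    by_cases hk : k = k0 <;> by_cases hi : i = a <;> simp [tripC, hk, hi, hab]

lemma Ju_tripC (k0 : V) (a b : N) :
    Ju t (tripC k0 a b : AMoDControl N V) = (t a b : ℤ) := by
  simp [Ju, tripC, mul_ite, mul_one, mul_zero, Finset.sum_ite_eq']

lemma tripC_feas {x : AMoDState N V} {k0 : V} {a b : N} (hx : FeasState t x)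
    (hA : 1 ≤ x.u k0 a + x.p k0 a 0) (hab : a ≠ b) :
    FeasControl t x (fun _ _ => 0) (tripC k0 a b) := by
  refine ⟨tripC_isControl hab, ?_, ?_⟩
  · intro k i
    rw [tripC_sumj]
    by_cases hk : k = k0
    · by_cases hi : i = a
      · rw [if_pos hk, if_pos hi]; subst hk; subst hi; exact hA
      · rw [if_pos hk, if_neg hi]
        exact add_nonneg (hx.isState.u_nonneg _ _) (hx.isState.p_nonneg _ _ _)
    · rw [if_neg hk]
      exact add_nonneg (hx.isState.u_nonneg _ _) (hx.isState.p_nonneg _ _ _)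
  · intro i j
    simp only [tripC, Finset.sum_const_zero]
    linarith [hx.isState.d_nonneg i j]

lemma planG_trip (hcard : 2 ≤ Fintype.card N) (ht : ∀ i j : N, i ≠ j → 1 ≤ t i j)
    {x : AMoDState N V} {k0 : V} {a i0 j0 : N} (hx : FeasState t x)
    (hA : 1 ≤ x.u k0 a + x.p k0 a 0) (hai : a ≠ i0) (hd : 1 ≤ x.d i0 j0) :
    PlanG t x (t a i0 + 1) := by
  have hfc := tripC_feas hx hA hai
  have hyf : FeasState t (succState t x (fun _ _ => 0) (tripC k0 a i0)) :=
    feasState_succ hcard ht hx hfc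
  have hyd : ∀ i j, (succState t x (fun _ _ => 0) (tripC k0 a i0)).d i j = x.d i j := by
    intro i j
    rw [d_succ]
    simp [tripC]
  have h1 : 1 ≤ t a i0 := ht a i0 hai
  have h2 : t a i0 ≤ Tmax t i0 + 1 := t_le_Tmax_add_one t hcard ht hai
  have hsum : ∀ s : ℕ, s = t a i0 →
      ∑ j ∈ Finset.univ.filter (fun j => t j i0 = s),
        ((tripC k0 a i0 : AMoDControl N V).v k0 j i0 + (tripC k0 a i0).w k0 j i0) = 1 := by
    intro s hs
    have hval : ∀ j, (tripC k0 a i0 : AMoDControl N V).v k0 j i0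
        + (tripC k0 a i0).w k0 j i0 = if j = a then 1 else 0 := by
      intro j
      by_cases hj : j = a <;> simp [tripC, hj]
    rw [Finset.sum_congr rfl fun j _ => hval j]
    rw [Finset.sum_ite_eq' (Finset.univ.filter (fun j => t j i0 = s)) a (fun _ => (1:ℤ))]
    rw [if_pos (Finset.mem_filter.mpr ⟨Finset.mem_univ a, hs.symm⟩)]
  have hyp : (succState t x (fun _ _ => 0) (tripC k0 a i0)).p k0 i0 (t a i0 - 1) = 1 := by
    have hzero : x.p k0 i0 (t a i0 - 1 + 1) = 0 := p_zero_of_avail hx hA i0 _ (by omega)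
    show (if t a i0 - 1 < Tmax t i0 then _ else if t a i0 - 1 = Tmax t i0 then _ else _) = 1
    rcases lt_or_eq_of_le (show t a i0 - 1 ≤ Tmax t i0 by omega) with hlt | heq
    · rw [if_pos hlt, hzero, zero_add]
      exact hsum _ (by omega)
    · rw [if_neg (by omega), if_pos heq]
      exact hsum _ (by omega)
  have hplanZ := planZ_wait hcard ht k0 i0 j0 (t a i0 - 1) _ hyf hyp (by omega)
    (by rw [hyd]; exact hd)
  rw [show t a i0 - 1 + 1 = t a i0 by omega] at hplanZ
  have hJu : Ju t (tripC k0 a i0 : AMoDControl N V) = (t a i0 : ℤ) := Ju_tripC k0 a i0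
  exact planG_prepend_trip hfc (by rw [hJu]; positivity)
    (by rw [hJu]; exact_mod_cast t_le_tmax t hai) hyd hplanZ

lemma planG_avail (hcard : 2 ≤ Fintype.card N) (ht : ∀ i j : N, i ≠ j → 1 ≤ t i j)
    {x : AMoDState N V} {k0 : V} {a i0 j0 : N} (hx : FeasState t x)
    (hA : 1 ≤ x.u k0 a + x.p k0 a 0) (hd : 1 ≤ x.d i0 j0) :
    PlanG t x (tmax t + 1) := by
  by_cases hai : a = i0
  · subst hai
    exact planG_mono (by omega) (planG_of_planZ (planZ_serve hcard ht (k0 := k0) hx hA hd))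
  · exact planG_mono (by have := t_le_tmax t hai; omega) (planG_trip hcard ht hx hA hai hd)

lemma planG_wait (hcard : 2 ≤ Fintype.card N) (ht : ∀ i j : N, i ≠ j → 1 ≤ t i j)
    (k0 : V) (i0 j0 : N) :
    ∀ (T' : ℕ) (b : N) (x : AMoDState N V), FeasState t x → x.p k0 b T' = 1 →
      T' ≤ Tmax t b → 1 ≤ x.d i0 j0 → PlanG t x (T' + (tmax t + 1)) := by
  intro T'
  induction T' with
  | zero =>
    intro b x hx hp hT hd
    rw [zero_add]
    exact planG_avail hcard ht (k0 := k0) (a := b) hx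
      (by have := hx.isState.u_nonneg k0 b; omega) hd
  | succ T' ih =>
    intro b x hx hp hT hd
    have hzf := zC_feas hx
    have hyf : FeasState t (succState t x (fun _ _ => 0) (zC N V)) :=
      feasState_succ hcard ht hx hzf
    have hyp : (succState t x (fun _ _ => 0) (zC N V)).p k0 b T' = 1 := by
      rw [p_succ_z, if_pos (by omega)]; exact hp
    have hyd : ∀ i j, (succState t x (fun _ _ => 0) (zC N V)).d i j = x.d i j :=
      fun i j => d_succ_z i j
    have hplan := ih b _ hyf hyp (by omega) (by rw [hyd]; exact hd)
    have := planG_prepend_zero hzf Ju_zC hyd hplan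
    rw [show T' + (tmax t + 1) + 1 = T' + 1 + (tmax t + 1) by omega] at this
    exact this

lemma exists_plan (hcard : 2 ≤ Fintype.card N) (ht : ∀ i j : N, i ≠ j → 1 ≤ t i j)
    [Nonempty V] {x : AMoDState N V} {i0 j0 : N} (hx : FeasState t x)
    (hd : 1 ≤ x.d i0 j0) : PlanG t x (2 * tmax t) := by
  obtain ⟨k0⟩ := (inferInstance : Nonempty V)
  have htm := one_le_tmax t hcard ht
  rcases exists_loc hx k0 with ⟨i', hu⟩ | ⟨i', T', hT', hp⟩
  · refine planG_mono (by omega) (planG_avail hcard ht (k0 := k0) (a := i') hx ?_ hd)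
    have := hx.isState.p_nonneg k0 i' 0
    omega
  · have h1 : T' + (tmax t + 1) ≤ 2 * tmax t := by
      have := Tmax_add_one_le_tmax t hcard ht i'
      omega
    exact planG_mono h1 (planG_wait hcard ht k0 i0 j0 T' i' x hx hp hT' hd)

lemma Jx_succ_le {x : AMoDState N V} {uc : AMoDControl N V}
    (hc : FeasControl t x (fun _ _ => 0) uc) :
    Jx (succState t x (fun _ _ => 0) uc) ≤ Jx x := by
  unfold Jx
  refine Finset.sum_le_sum fun i _ => Finset.sum_le_sum fun j _ => ?_
  rw [d_succ]
  have : 0 ≤ ∑ k, uc.v k i j := Finset.sum_nonneg fun k _ => hc.isControl.v_nonneg k i j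
  linarith

lemma feasTraj_feasState (hcard : 2 ≤ Fintype.card N) (ht : ∀ i j : N, i ≠ j → 1 ≤ t i j)
    {x : AMoDState N V} {n : ℕ} {xs : ℕ → AMoDState N V} {cs : ℕ → AMoDControl N V}
    (hx : FeasState t x) (h : FeasTraj t x n xs cs) :
    ∀ m, m ≤ n → FeasState t (xs m) := by
  intro m
  induction m with
  | zero => intro _; rw [h.1]; exact hx
  | succ m ih =>
    intro hm
    rw [(h.2 m (by omega)).2]
    exact feasState_succ hcard ht (ih (by omega)) ((h.2 m (by omega)).1)

lemma feasTraj_Jx_mono {x : AMoDState N V} {n : ℕ} {xs : ℕ → AMoDState N V}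
    {cs : ℕ → AMoDControl N V} (h : FeasTraj t x n xs cs) :
    ∀ a b, a ≤ b → b ≤ n → Jx (xs b) ≤ Jx (xs a) := by
  intro a b hab hbn
  induction b with
  | zero => have ha : a = 0 := by omega
            rw [ha]
  | succ b ih =>
    rcases Nat.lt_or_ge a (b + 1) with hlt | hge
    · have h1 : Jx (xs (b + 1)) ≤ Jx (xs b) := by
        rw [(h.2 b (by omega)).2]
        exact Jx_succ_le (h.2 b (by omega)).1
      exact le_trans h1 (ih (by omega) (by omega))
    · have ha : a = b + 1 := by omega
      rw [ha]

lemma planCost_nonneg (hcard : 2 ≤ Fintype.card N) (ht : ∀ i j : N, i ≠ j → 1 ≤ t i j)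
    {ρ1 : ℝ} (hρ : 0 ≤ ρ1) {thor : ℕ} {x : AMoDState N V} {xs : ℕ → AMoDState N V}
    {cs : ℕ → AMoDControl N V} (hx : FeasState t x) (h : FeasTraj t x thor xs cs) :
    0 ≤ planCost t ρ1 thor xs cs := by
  unfold planCost
  refine Finset.sum_nonneg fun τ hτ => ?_
  rw [Finset.mem_range] at hτ
  have h1 : (0:ℝ) ≤ (Jx (xs (τ + 1)) : ℝ) := by
    exact_mod_cast Jx_nonneg (feasTraj_feasState hcard ht hx h (τ + 1) (by omega)).isState
  have h2 : (0:ℝ) ≤ (Ju t (cs τ) : ℝ) := by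
    exact_mod_cast Ju_nonneg ((h.2 τ hτ).1.isControl)
  have := mul_nonneg hρ h2
  linarith

lemma planG_cost (hρ : 0 ≤ ρ1) {thor : ℕ} (hthor : 2 * tmax t ≤ thor)
    (hthor1 : 1 ≤ thor) {x : AMoDState N V} (h : PlanG t x (2 * tmax t)) :
    ∃ xs cs, FeasTraj t x thor xs cs ∧
      planCost t ρ1 thor xs cs ≤ (thor : ℝ) * (Jx x : ℝ) - 1 + ρ1 * (tmax t : ℝ) := by
  obtain ⟨es, hG, hle, hdrop, m0, hJm⟩ := h
  refine ⟨fun m => planIter t es x m, es, ⟨rfl, fun τ _ => ⟨hG τ, rfl⟩⟩, ?_⟩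
  unfold planCost
  rw [Finset.sum_add_distrib]
  have hS1 : ∑ τ ∈ Finset.range thor, (Jx (planIter t es x (τ + 1)) : ℝ)
      ≤ (thor : ℝ) * (Jx x : ℝ) - 1 := by
    have hZ : ∑ τ ∈ Finset.range thor, Jx (planIter t es x (τ + 1))
        ≤ (thor : ℤ) * Jx x - 1 := by
      have hterm : ∀ τ ∈ Finset.range thor, Jx (planIter t es x (τ + 1))
          ≤ Jx x - (if 2 * tmax t ≤ τ + 1 then 1 else 0) := by
        intro τ _
        split_ifs with h'
        · exact hdrop (τ + 1) h'
        · rw [sub_zero]; exact hle (τ + 1)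
      refine le_trans (Finset.sum_le_sum hterm) ?_
      rw [Finset.sum_sub_distrib, Finset.sum_const, Finset.card_range, nsmul_eq_mul]
      have hmem : thor - 1 ∈ Finset.range thor := Finset.mem_range.mpr (by omega)
      have hind := Finset.single_le_sum
        (f := fun τ => if 2 * tmax t ≤ τ + 1 then (1:ℤ) else 0)
        (fun τ _ => by split <;> omega) hmem
      rw [if_pos (show 2 * tmax t ≤ thor - 1 + 1 by omega)] at hind
      linarith
    have hcast := (Int.cast_le (R := ℝ)).mpr hZ
    push_cast at hcast ⊢
    linarith
  have hS2 : ∑ τ ∈ Finset.range thor, ρ1 * (Ju t (es τ) : ℝ) ≤ ρ1 * (tmax t : ℝ) := by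
    rw [← Finset.mul_sum]
    refine mul_le_mul_of_nonneg_left ?_ hρ
    have hZ : ∑ τ ∈ Finset.range thor, Ju t (es τ) ≤ (tmax t : ℤ) := by
      refine le_trans (Finset.sum_le_sum fun τ _ => (hJm τ).2) ?_
      rw [Finset.sum_ite_eq' (Finset.range thor) m0 (fun _ => (tmax t : ℤ))]
      split <;> simp
    have hcast := (Int.cast_le (R := ℝ)).mpr hZ
    push_cast at hcast ⊢
    linarith
  linarith

lemma shifted_plan (hcard : 2 ≤ Fintype.card N) (ht : ∀ i j : N, i ≠ j → 1 ≤ t i j)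
    {thor : ℕ} (hthor1 : 1 ≤ thor) {x : AMoDState N V} {ys : ℕ → AMoDState N V}
    {ds : ℕ → AMoDControl N V} (hx : FeasState t x) (h : FeasTraj t x thor ys ds)
    {ρ1 : ℝ} (hρ : 0 ≤ ρ1) :
    ∃ zs es, FeasTraj t (ys 1) thor zs es ∧
      planCost t ρ1 thor zs es
        ≤ planCost t ρ1 thor ys ds - (Jx (ys 1) : ℝ) + (Jx (ys thor) : ℝ) := by
  obtain ⟨K, rfl⟩ : ∃ K, thor = K + 1 := ⟨thor - 1, by omega⟩
  set es : ℕ → AMoDControl N V := fun m => if m < K then ds (m + 1) else zC N V with hes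
  have zeq : ∀ n, n ≤ K → planIter t es (ys 1) n = ys (n + 1) := by
    intro n
    induction n with
    | zero => intro _; rfl
    | succ n ih =>
      intro hn
      have h2 := (h.2 (n + 1) (by omega)).2
      show succState t (planIter t es (ys 1) n) (fun _ _ => 0) (es n) = ys (n + 1 + 1)
      rw [ih (by omega), h2]
      congr 1
      exact if_pos (by omega)
  refine ⟨fun n => planIter t es (ys 1) n, es, ⟨rfl, fun τ hτ => ⟨?_, rfl⟩⟩, ?_⟩
  · show FeasControl t (planIter t es (ys 1) τ) (fun _ _ => 0) (es τ)
    by_cases hτK : τ < K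
    · rw [zeq τ (by omega), show es τ = ds (τ + 1) from if_pos hτK]
      exact (h.2 (τ + 1) (by omega)).1
    · rw [zeq τ (by omega), show es τ = zC N V from if_neg hτK]
      exact zC_feas (feasTraj_feasState hcard ht hx h (τ + 1) (by omega))
  · unfold planCost
    simp only []
    rw [Finset.sum_range_succ]
    have hterm : ∀ τ ∈ Finset.range K,
        ((Jx (planIter t es (ys 1) (τ + 1)) : ℝ) + ρ1 * (Ju t (es τ) : ℝ))
          = ((Jx (ys (τ + 2)) : ℝ) + ρ1 * (Ju t (ds (τ + 1)) : ℝ)) := by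
      intro τ hτ
      rw [Finset.mem_range] at hτ
      rw [zeq (τ + 1) (by omega), show es τ = ds (τ + 1) from if_pos hτ]
    rw [Finset.sum_congr rfl hterm]
    have hlastJx : Jx (planIter t es (ys 1) (K + 1)) = Jx (ys (K + 1)) := by
      show Jx (succState t (planIter t es (ys 1) K) (fun _ _ => 0) (es K)) = _
      rw [show es K = zC N V from if_neg (lt_irrefl K)]
      rw [Jx_congr (fun i j => d_succ_z i j), zeq K (le_refl K)]
    have hlastJu : Ju t (es K) = 0 := by
      rw [show es K = zC N V from if_neg (lt_irrefl K)]
      exact Ju_zC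
    rw [hlastJx, hlastJu]
    have hrhs : ∑ τ ∈ Finset.range (K + 1),
        ((Jx (ys (τ + 1)) : ℝ) + ρ1 * (Ju t (ds τ) : ℝ))
          = (∑ τ ∈ Finset.range K, ((Jx (ys (τ + 2)) : ℝ) + ρ1 * (Ju t (ds (τ + 1)) : ℝ)))
            + ((Jx (ys 1) : ℝ) + ρ1 * (Ju t (ds 0) : ℝ)) :=
      Finset.sum_range_succ' (fun τ => ((Jx (ys (τ + 1)) : ℝ) + ρ1 * (Ju t (ds τ) : ℝ))) K
    rw [hrhs]
    have hJu0 : (0:ℝ) ≤ (Ju t (ds 0) : ℝ) := by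
      exact_mod_cast Ju_nonneg ((h.2 0 (by omega)).1.isControl)
    have hm := mul_nonneg hρ hJu0
    simp only [Int.cast_zero, mul_zero, add_zero]
    linarith

lemma eventually_const : ∀ (B : ℕ) (f : ℕ → ℕ), (∀ a b, a ≤ b → f b ≤ f a) → f 0 ≤ B →
    ∃ T, ∀ τ, T ≤ τ → f τ = f T := by
  intro B
  induction B with
  | zero =>
    intro f hm h0
    exact ⟨0, fun τ hτ => by have := hm 0 τ (by omega); omega⟩
  | succ B ih =>
    intro f hm h0
    by_cases hconst : ∀ n, f n = f 0
    · exact ⟨0, fun τ _ => by rw [hconst τ, hconst 0]⟩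
    · push_neg at hconst
      obtain ⟨n, hn⟩ := hconst
      have hlt : f n < f 0 := lt_of_le_of_ne (hm 0 n (by omega)) hn
      obtain ⟨T, hT⟩ := ih (fun m => f (n + m))
        (fun a b hab => hm (n + a) (n + b) (by omega))
        (by simp only [Nat.add_zero]; omega)
      refine ⟨n + T, fun τ hτ => ?_⟩
      have := hT (τ - n) (by omega)
      rw [show n + (τ - n) = τ by omega] at this
      exact this

lemma eventually_const' {f : ℕ → ℕ} (hf : ∀ n, f (n + 1) ≤ f n) :
    ∃ T, ∀ τ, T ≤ τ → f τ = f T := by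
  have hm : ∀ a b, a ≤ b → f b ≤ f a := by
    intro a b hab
    induction b with
    | zero => have h0 : a = 0 := by omega
              rw [h0]
    | succ b ih =>
      rcases Nat.lt_or_ge a (b + 1) with hlt | hge
      · exact le_trans (hf b) (ih (by omega))
      · have h0 : a = b + 1 := by omega
        rw [h0]
  exact eventually_const (f 0) f hm (le_refl _)

end Plans
/-- **Theorem 1 (asymptotic stability of MPC without charging constraints):** if
`t_hor ≥ 2·tmax`, there is a `ρ̄ > 0` such that for every weight `0 ≤ ρ₁ < ρ̄`, every
MPC trajectory of the undisturbed system from a feasible state eventually has all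
waiting-customer counts equal to zero. -/
theorem mpc_solves_ARP {N V : Type} [Fintype N] [DecidableEq N] [Fintype V]
    [Nonempty V] (t : N → N → ℕ) (hcard : 2 ≤ Fintype.card N)
    (ht : ∀ i j : N, i ≠ j → 1 ≤ t i j)
    (thor : ℕ) (hthor : 2 * tmax t ≤ thor) :
    ∃ ρbar : ℝ, 0 < ρbar ∧
      ∀ ρ1 : ℝ, 0 ≤ ρ1 → ρ1 < ρbar →
        ∀ (xs : ℕ → AMoDState N V) (cs : ℕ → AMoDControl N V),
          FeasState t (xs 0) → MPCTraj t ρ1 thor xs cs →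
            ∃ T : ℕ, ∀ τ ≥ T, ∀ i j : N, (xs τ).d i j = 0 := by
  classical
  have htm := one_le_tmax t hcard ht
  refine ⟨1 / ((tmax t : ℝ) + 1), by positivity, ?_⟩
  intro ρ1 hρ0 hρ1 xs cs hx0 hmpc
  obtain ⟨hstep, hopt⟩ := hmpc
  have hFS : ∀ τ, FeasState t (xs τ) := by
    intro τ
    induction τ with
    | zero => exact hx0
    | succ τ ih =>
      rw [(hstep τ).2]
      exact feasState_succ hcard ht ih (hstep τ).1
  have hJmono : ∀ τ, Jx (xs (τ + 1)) ≤ Jx (xs τ) := by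
    intro τ
    rw [(hstep τ).2]
    exact Jx_succ_le (hstep τ).1
  have hJnn : ∀ τ, 0 ≤ Jx (xs τ) := fun τ => Jx_nonneg (hFS τ).isState
  obtain ⟨T0, hT0⟩ := eventually_const' (f := fun τ => (Jx (xs τ)).toNat)
    (fun τ => by have h1 := hJmono τ; have h2 := hJnn τ; have h3 := hJnn (τ + 1); omega)
  have hJconst : ∀ τ, T0 ≤ τ → Jx (xs τ) = Jx (xs T0) := by
    intro τ hτ
    have h1 := hT0 τ hτ
    have h2 := hJnn τ
    have h3 := hJnn T0
    omega
  set D := Jx (xs T0) with hD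
  rcases le_or_gt D 0 with hD0 | hD1
  · refine ⟨T0, fun τ hτ i j => ?_⟩
    have h1 : Jx (xs τ) = D := hJconst τ hτ
    have h2 := d_le_Jx (hFS τ).isState i j
    have h3 := (hFS τ).isState.d_nonneg i j
    omega
  · exfalso
    have hρtm : ρ1 * (tmax t : ℝ) < 1 := by
      have hpos : (0:ℝ) < (tmax t : ℝ) + 1 := by positivity
      have h1 : ρ1 * ((tmax t : ℝ) + 1) < (1 / ((tmax t : ℝ) + 1)) * ((tmax t : ℝ) + 1) :=
        mul_lt_mul_of_pos_right hρ1 hpos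
      have h2 : (1 / ((tmax t : ℝ) + 1)) * ((tmax t : ℝ) + 1) = 1 := by field_simp
      nlinarith
    have hthor1 : 1 ≤ thor := by omega
    have hwit : ∀ τ, ∃ yd : (ℕ → AMoDState N V) × (ℕ → AMoDControl N V),
        MPCOptimal t ρ1 thor (xs τ) yd.1 yd.2 ∧ yd.2 0 = cs τ := by
      intro τ
      obtain ⟨ys, ds, h1, h2⟩ := hopt τ
      exact ⟨⟨ys, ds⟩, h1, h2⟩
    choose g hg1 hg2 using hwit
    set Φ : ℕ → ℝ := fun τ => planCost t ρ1 thor (g τ).1 (g τ).2 with hΦ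
    have hA : ∀ τ, T0 ≤ τ → Φ τ ≤ (thor : ℝ) * (D : ℝ) - 1 + ρ1 * (tmax t : ℝ) := by
      intro τ hτ
      have hJτ : Jx (xs τ) = D := hJconst τ hτ
      have hentry : ∃ i0 j0, 1 ≤ (xs τ).d i0 j0 := by
        by_contra hcon
        push_neg at hcon
        have hle : Jx (xs τ) ≤ 0 :=
          Finset.sum_nonpos fun i _ => Finset.sum_nonpos fun j _ => by
            have := hcon i j; omega
        omega
      obtain ⟨i0, j0, hij⟩ := hentry
      obtain ⟨zs, es, hft, hcost⟩ := planG_cost hρ0 hthor hthor1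
        (exists_plan hcard ht (hFS τ) hij)
      have hopt' := (hg1 τ).2 zs es hft
      rw [hJτ] at hcost
      calc Φ τ ≤ planCost t ρ1 thor zs es := hopt'
        _ ≤ (thor : ℝ) * (D : ℝ) - 1 + ρ1 * (tmax t : ℝ) := hcost
    have htail : ∀ τ, T0 ≤ τ → Jx ((g τ).1 thor) ≤ D - 1 := by
      intro τ hτ
      by_contra hcon
      push_neg at hcon
      have hft := (hg1 τ).1
      have hmono := feasTraj_Jx_mono hft
      have hDle : ∀ m, m ≤ thor → D ≤ Jx ((g τ).1 m) := fun m hm =>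
        le_trans (by omega) (hmono m thor hm (le_refl _))
      have hcost_lb : (thor : ℝ) * (D : ℝ) ≤ Φ τ := by
        have hterm : ∀ τ' ∈ Finset.range thor,
            (D : ℝ) ≤ (Jx ((g τ).1 (τ' + 1)) : ℝ) + ρ1 * (Ju t ((g τ).2 τ') : ℝ) := by
          intro τ' hτ'
          rw [Finset.mem_range] at hτ'
          have h1 : (D : ℝ) ≤ (Jx ((g τ).1 (τ' + 1)) : ℝ) := by
            exact_mod_cast hDle (τ' + 1) (by omega)
          have h2 : (0:ℝ) ≤ (Ju t ((g τ).2 τ') : ℝ) := by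
            exact_mod_cast Ju_nonneg ((hft.2 τ' hτ').1.isControl)
          nlinarith
        calc (thor : ℝ) * (D : ℝ) = ∑ _τ' ∈ Finset.range thor, (D : ℝ) := by
              rw [Finset.sum_const, Finset.card_range, nsmul_eq_mul]
          _ ≤ Φ τ := Finset.sum_le_sum hterm
      have hub := hA τ hτ
      linarith
    have hB : ∀ τ, T0 ≤ τ → Φ (τ + 1) ≤ Φ τ - 1 := by
      intro τ hτ
      have hft := (hg1 τ).1
      obtain ⟨zs, es, hzft, hzcost⟩ :=
        shifted_plan hcard ht hthor1 (hFS τ) hft hρ0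
      have h1 : (g τ).1 1 = xs (τ + 1) := by
        have he := (hft.2 0 (by omega)).2
        rw [(hstep τ).2, ← hg2 τ, ← hft.1]
        exact he
      rw [h1] at hzft hzcost
      have hopt' := (hg1 (τ + 1)).2 zs es hzft
      have h2 : Jx (xs (τ + 1)) = D := hJconst (τ + 1) (by omega)
      have h3 : (Jx ((g τ).1 thor) : ℝ) ≤ (D : ℝ) - 1 := by
        exact_mod_cast htail τ hτ
      rw [h2] at hzcost
      calc Φ (τ + 1) ≤ planCost t ρ1 thor zs es := hopt'
        _ ≤ Φ τ - (D : ℝ) + (Jx ((g τ).1 thor) : ℝ) := hzcost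
        _ ≤ Φ τ - 1 := by linarith
    have hΦnn : ∀ τ, 0 ≤ Φ τ := fun τ =>
      planCost_nonneg hcard ht hρ0 (hFS τ) (hg1 τ).1
    have hdesc : ∀ n : ℕ, Φ (T0 + n) ≤ Φ T0 - n := by
      intro n
      induction n with
      | zero => simp
      | succ n ih =>
        have := hB (T0 + n) (by omega)
        have harith : T0 + n + 1 = T0 + (n + 1) := by omega
        rw [harith] at this
        push_cast
        push_cast at ih
        linarith
    obtain ⟨n, hn⟩ := exists_nat_gt (Φ T0)
    have h1 := hdesc n
    have h2 := hΦnn (T0 + n)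
    linarith
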